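/- Let N ≥ 2, let A be the (N−1)×N real matrix with A_{i,i} = 1, A_{i,i+1} = 1 and all other entries 0, let D be the (N−1)×N real matrix with D_{i,i} = 1, D_{i,i+1} = −1 and all other entries 0, let M̂ = diag(1/m_1, …, 1/m_N) with each m_i > 0, and set K = Aᵀ·(D·M̂·Dᵀ)⁻¹·D. Then the kernel of K is exactly the span of the all-ones vector 1_N, and K has rank N−1. -/

import Mathlib

open Matrix

private lemma sum_two {ι : Type*} [Fintype ι] [DecidableEq ι] (f : ι → ℝ) (a b : ι)
    (hab : a ≠ b) (h : ∀ c, c ≠ a → c ≠ b → f c = 0) :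
    ∑ i, f i = f a + f b := by
  have h1 : ∑ i ∈ Finset.univ.erase a, f i = f b :=
    Finset.sum_eq_single_of_mem b (Finset.mem_erase.2 ⟨hab.symm, Finset.mem_univ b⟩)
      (fun c hc hcb => h c (Finset.mem_erase.1 hc).1 hcb)
  rw [← Finset.sum_erase_add _ _ (Finset.mem_univ a), h1, add_comm]

/-- The kernel of the coupling matrix `K = Aᵀ (D Mhat Dᵀ)⁻¹ D` is exactly the span of
the all-ones vector, and `K` has rank `N - 1`. -/
theorem K_ker_and_rank (N : ℕ) (hN : 2 ≤ N)
    (A D : Matrix (Fin (N - 1)) (Fin N) ℝ)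
    (hA : ∀ i j, A i j = if (j : ℕ) = (i : ℕ) then 1
      else if (j : ℕ) = (i : ℕ) + 1 then 1 else 0)
    (hD : ∀ i j, D i j = if (j : ℕ) = (i : ℕ) then 1
      else if (j : ℕ) = (i : ℕ) + 1 then -1 else 0)
    (m : Fin N → ℝ) (hm : ∀ i, 0 < m i)
    (Mhat : Matrix (Fin N) (Fin N) ℝ)
    (hM : Mhat = Matrix.diagonal fun i => (m i)⁻¹)
    (K : Matrix (Fin N) (Fin N) ℝ)
    (hK : K = Aᵀ * (D * Mhat * Dᵀ)⁻¹ * D) :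
    LinearMap.ker K.mulVecLin = Submodule.span ℝ {fun _ => (1 : ℝ)} ∧
      K.rank = N - 1 := by
  have hN1 : 1 ≤ N - 1 := by omega
  -- Dᵀ *ᵥ y = 0 → y = 0
  have hDt : ∀ y : Fin (N - 1) → ℝ, Dᵀ *ᵥ y = 0 → y = 0 := by
    intro y hy
    have key : ∀ k (hk : k < N - 1), y ⟨k, hk⟩ = 0 := by
      intro k
      induction k with
      | zero =>
        intro hk
        have h0 := congrFun hy ⟨0, by omega⟩
        simp only [mulVec, transpose_apply, dotProduct, Pi.zero_apply] at h0
        rw [Finset.sum_eq_single (⟨0, hk⟩ : Fin (N - 1))] at h0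
        · rw [hD] at h0; simpa using h0
        · intro c _ hc
          rw [hD]
          have h1 : (0 : ℕ) ≠ (c : ℕ) := fun h => hc (Fin.ext h.symm)
          have h2 : (0 : ℕ) ≠ (c : ℕ) + 1 := by omega
          simp [h1, h2]
        · intro h; exact absurd (Finset.mem_univ _) h
      | succ k ih =>
        intro hk
        have hk' : k < N - 1 := by omega
        have h0 := congrFun hy ⟨k + 1, by omega⟩
        simp only [mulVec, transpose_apply, dotProduct, Pi.zero_apply] at h0
        rw [sum_two _ (⟨k + 1, hk⟩ : Fin (N - 1)) (⟨k, hk'⟩ : Fin (N - 1))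
          (by simp [Fin.ext_iff]) ?_] at h0
        · rw [hD, hD] at h0
          have hik := ih hk'
          have e1 : (k + 1 : ℕ) ≠ k + 1 + 1 := by omega
          have e2 : (k + 1 : ℕ) ≠ k := by omega
          simp [e1, e2] at h0
          linarith [h0, hik]
        · intro c hca hcb
          rw [hD]
          have h1 : (k + 1 : ℕ) ≠ (c : ℕ) := fun h => hca (Fin.ext h.symm)
          have h2 : (k + 1 : ℕ) ≠ (c : ℕ) + 1 := fun h => hcb (Fin.ext (Nat.succ_injective h.symm))
          simp [h1, h2]
          intro h; exact absurd h (by omega)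
    funext i
    have := key i i.isLt
    simpa using this
  -- Aᵀ *ᵥ u = 0 → u = 0
  have hAt : ∀ u : Fin (N - 1) → ℝ, Aᵀ *ᵥ u = 0 → u = 0 := by
    intro u hu
    have key : ∀ k (hk : k < N - 1), u ⟨k, hk⟩ = 0 := by
      intro k
      induction k with
      | zero =>
        intro hk
        have h0 := congrFun hu ⟨0, by omega⟩
        simp only [mulVec, transpose_apply, dotProduct, Pi.zero_apply] at h0
        rw [Finset.sum_eq_single (⟨0, hk⟩ : Fin (N - 1))] at h0
        · rw [hA] at h0; simpa using h0
        · intro c _ hc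
          rw [hA]
          have h1 : (0 : ℕ) ≠ (c : ℕ) := fun h => hc (Fin.ext h.symm)
          have h2 : (0 : ℕ) ≠ (c : ℕ) + 1 := by omega
          simp [h1, h2]
        · intro h; exact absurd (Finset.mem_univ _) h
      | succ k ih =>
        intro hk
        have hk' : k < N - 1 := by omega
        have h0 := congrFun hu ⟨k + 1, by omega⟩
        simp only [mulVec, transpose_apply, dotProduct, Pi.zero_apply] at h0
        rw [sum_two _ (⟨k + 1, hk⟩ : Fin (N - 1)) (⟨k, hk'⟩ : Fin (N - 1))
          (by simp [Fin.ext_iff]) ?_] at h0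
        · rw [hA, hA] at h0
          have hik := ih hk'
          have e1 : (k + 1 : ℕ) ≠ k + 1 + 1 := by omega
          have e2 : (k + 1 : ℕ) ≠ k := by omega
          simp [e1, e2] at h0
          linarith [h0, hik]
        · intro c hca hcb
          rw [hA]
          have h1 : (k + 1 : ℕ) ≠ (c : ℕ) := fun h => hca (Fin.ext h.symm)
          have h2 : (k + 1 : ℕ) ≠ (c : ℕ) + 1 := fun h => hcb (Fin.ext (Nat.succ_injective h.symm))
          simp [h1, h2]
          intro h; exact absurd h (by omega)
    funext i
    have := key i i.isLt
    simpa using this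
  -- D *ᵥ x formula
  have hDmul : ∀ (x : Fin N → ℝ) (i : Fin (N - 1)),
      (D *ᵥ x) i = x ⟨i, by omega⟩ - x ⟨(i : ℕ) + 1, by omega⟩ := by
    intro x i
    simp only [mulVec, dotProduct]
    rw [sum_two _ (⟨i, by omega⟩ : Fin N) (⟨(i : ℕ) + 1, by omega⟩ : Fin N)
      (by simp [Fin.ext_iff]) ?_]
    · rw [hD, hD]
      have e1 : (i : ℕ) ≠ (i : ℕ) + 1 := by omega
      simp [e1]
      ring
    · intro c hca hcb
      rw [hD]
      have h1 : (c : ℕ) ≠ (i : ℕ) := fun h => hca (Fin.ext h)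
      have h2 : (c : ℕ) ≠ (i : ℕ) + 1 := fun h => hcb (Fin.ext h)
      simp [h1, h2]
  -- W := D * Mhat * Dᵀ is a unit
  set W := D * Mhat * Dᵀ with hWdef
  have hWker : ∀ y : Fin (N - 1) → ℝ, W *ᵥ y = 0 → y = 0 := by
    intro y hy
    have hq : y ⬝ᵥ (W *ᵥ y) = 0 := by rw [hy, dotProduct_zero]
    have hexp : y ⬝ᵥ (W *ᵥ y) = (Dᵀ *ᵥ y) ⬝ᵥ (Mhat *ᵥ (Dᵀ *ᵥ y)) := by
      rw [hWdef]
      rw [← mulVec_mulVec, ← mulVec_mulVec, dotProduct_mulVec y D, ← mulVec_transpose]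
    rw [hexp, hM] at hq
    set u := Dᵀ *ᵥ y with hu
    have hterm : ∀ i, u i * ((m i)⁻¹ * u i) = 0 := by
      have hsum : ∑ i, u i * ((m i)⁻¹ * u i) = 0 := by
        rw [← hq]
        simp [dotProduct, mulVec_diagonal]
      have hnn : ∀ i ∈ Finset.univ, 0 ≤ u i * ((m i)⁻¹ * u i) := by
        intro i _
        have : 0 ≤ (m i)⁻¹ := le_of_lt (inv_pos.2 (hm i))
        nlinarith [sq_nonneg (u i)]
      intro i
      exact (Finset.sum_eq_zero_iff_of_nonneg hnn).1 hsum i (Finset.mem_univ i)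
    have hu0 : u = 0 := by
      funext i
      simp only [Pi.zero_apply]
      have hmi : (0:ℝ) < (m i)⁻¹ := inv_pos.2 (hm i)
      by_contra h
      have h2 : 0 < u i * u i := mul_self_pos.2 h
      nlinarith [hterm i, mul_pos hmi h2]
    exact hDt y hu0
  have hWunit : IsUnit W := by
    rw [← Matrix.mulVec_injective_iff_isUnit]
    intro a b hab
    have h0 : W *ᵥ (a - b) = 0 := by
      rw [mulVec_sub, hab, sub_self]
    exact sub_eq_zero.1 (hWker _ h0)
  have hWW : W * W⁻¹ = 1 := Matrix.mul_nonsing_inv W ((Matrix.isUnit_iff_isUnit_det W).1 hWunit)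
  -- kernel characterization
  have hker : LinearMap.ker K.mulVecLin = Submodule.span ℝ {fun _ => (1 : ℝ)} := by
    apply le_antisymm
    · intro x hx
      have hx0 : K *ᵥ x = 0 := hx
      rw [hK] at hx0
      have h1 : Aᵀ *ᵥ ((W⁻¹ * D) *ᵥ x) = 0 := by
        rw [mulVec_mulVec, ← Matrix.mul_assoc]
        exact hx0
      have h2 : (W⁻¹ * D) *ᵥ x = 0 := hAt _ h1
      have h3 : D *ᵥ x = 0 := by
        have heq : (W * (W⁻¹ * D)) *ᵥ x = W *ᵥ ((W⁻¹ * D) *ᵥ x) := (mulVec_mulVec _ _ _).symm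
        rw [← Matrix.mul_assoc, hWW, Matrix.one_mul] at heq
        rw [heq, h2, mulVec_zero]
      -- x is constant
      have hconst : ∀ k (hk : k < N), x ⟨k, hk⟩ = x ⟨0, by omega⟩ := by
        intro k
        induction k with
        | zero => intro hk; rfl
        | succ k ih =>
          intro hk
          have hk' : k < N - 1 := by omega
          have hc := congrFun h3 ⟨k, hk'⟩
          rw [hDmul] at hc
          simp only [Pi.zero_apply] at hc
          have hxk : x ⟨k, by omega⟩ = x ⟨k + 1, hk⟩ := by
            have := sub_eq_zero.1 hc
            convert this using 2
          rw [← hxk, ih (by omega)]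
      have hxeq : x = x ⟨0, by omega⟩ • (fun _ => (1 : ℝ)) := by
        funext j
        have := hconst j j.isLt
        simp only [Pi.smul_apply, smul_eq_mul, mul_one]
        convert this using 2
      rw [hxeq]
      exact Submodule.smul_mem _ _ (Submodule.subset_span rfl)
    · rw [Submodule.span_le]
      intro v hv
      rcases hv with rfl
      simp only [SetLike.mem_coe, LinearMap.mem_ker]
      show K *ᵥ (fun _ => (1:ℝ)) = 0
      have hD1 : D *ᵥ (fun _ => (1:ℝ)) = 0 := by
        funext i
        rw [hDmul]
        simp
      rw [hK, ← mulVec_mulVec, ← mulVec_mulVec, hD1, mulVec_zero, mulVec_zero]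
  refine ⟨hker, ?_⟩
  -- rank
  have hrn := LinearMap.finrank_range_add_finrank_ker K.mulVecLin
  have hdom : Module.finrank ℝ (Fin N → ℝ) = N := by
    simp [Module.finrank_pi]
  have hkr : Module.finrank ℝ (LinearMap.ker K.mulVecLin) = 1 := by
    rw [hker]
    have h1 : (fun _ => (1:ℝ) : Fin N → ℝ) ≠ 0 := by
      intro h
      have := congrFun h ⟨0, by omega⟩
      simp at this
    exact finrank_span_singleton h1
  rw [Matrix.rank]
  omega
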